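/- arXiv:0711.4835 — 4 statements merged into one kernel-verified Lean document; each statement's English description precedes it below -/
import Mathlib

section
/- Let f : ℂ → ℂ be a polynomial of degree d ≥ 2. There do not exist a constant c ∈ ℂ and a sequence (aₙ) of complex numbers, not all zero, such that the partial sums ∑_{n=0}^{N} aₙ · f^[n](w) converge to c uniformly on compact subsets of ℂ (i.e., f admits no global time average). -/
open Filter Topology

/-- A polynomial over `ℂ` whose only root is `y` is `C lc * (X - C y) ^ deg`. -/
lemma aux_only_root {p : Polynomial ℂ} (_hp : p ≠ 0) (y : ℂ)
    (h : ∀ r, p.IsRoot r → r = y) :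
    p = Polynomial.C p.leadingCoeff * (Polynomial.X - Polynomial.C y) ^ p.natDegree := by
  have hsp : p.Splits := IsAlgClosed.splits p
  have hcard : p.roots.card = p.natDegree := (Polynomial.splits_iff_card_roots).mp hsp
  have hroots : p.roots = Multiset.replicate p.natDegree y := by
    rw [← hcard]
    exact Multiset.eq_replicate_card.mpr fun b hb =>
      h b (Polynomial.isRoot_of_mem_roots hb)
  calc p = Polynomial.C p.leadingCoeff * (p.roots.map fun a => Polynomial.X - Polynomial.C a).prod :=
        hsp.eq_prod_roots
    _ = _ := by rw [hroots, Multiset.map_replicate, Multiset.prod_replicate]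

/-- A polynomial of degree at least 2 is not injective on `ℂ`. -/
lemma aux_noninj (f : Polynomial ℂ) (hd : 2 ≤ f.natDegree) :
    ∃ x y : ℂ, x ≠ y ∧ f.eval x = f.eval y := by
  set p := f - Polynomial.C (f.eval 0) with hpdef
  have hpd : p.natDegree = f.natDegree := Polynomial.natDegree_sub_C
  have hp0 : p ≠ 0 := by
    intro h
    rw [h, Polynomial.natDegree_zero] at hpd
    omega
  have hpe : ∀ w, p.eval w = f.eval w - f.eval 0 := by
    intro w; simp [hpdef]
  by_cases hr : ∃ r, p.IsRoot r ∧ r ≠ 0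
  · obtain ⟨r, hr1, hr2⟩ := hr
    refine ⟨r, 0, hr2, ?_⟩
    have h5 := hpe r
    rw [hr1] at h5
    linear_combination -h5
  · push_neg at hr
    have hform : p = Polynomial.C p.leadingCoeff * (Polynomial.X - Polynomial.C 0) ^ p.natDegree :=
      aux_only_root hp0 0 hr
    obtain ⟨lc, d, hd2, hform'⟩ : ∃ lc d, 2 ≤ d ∧ p = Polynomial.C lc * Polynomial.X ^ d :=
      ⟨p.leadingCoeff, p.natDegree, by omega, by simpa using hform⟩
    have heval : ∀ w : ℂ, f.eval w = f.eval 0 + lc * w ^ d := by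
      intro w
      have h5 := hpe w
      rw [hform'] at h5
      simp at h5
      linear_combination -h5
    have hdne : d ≠ 0 := by omega
    have hprim := Complex.isPrimitiveRoot_exp d hdne
    set ζ := Complex.exp (2 * Real.pi * Complex.I / d) with hζ
    refine ⟨ζ, 1, hprim.ne_one (by omega), ?_⟩
    rw [heval ζ, heval 1, hprim.pow_eq_one, one_pow]

/-- A nonconstant polynomial over `ℂ` is surjective. -/
lemma aux_surj (f : Polynomial ℂ) (hd : 2 ≤ f.natDegree) (z : ℂ) : ∃ w, f.eval w = z := by
  have h1 : (f - Polynomial.C z).natDegree = f.natDegree := Polynomial.natDegree_sub_C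
  have h2 : 0 < (f - Polynomial.C z).natDegree := by omega
  obtain ⟨w, hw⟩ := Complex.exists_root (Polynomial.natDegree_pos_iff_degree_pos.mp h2)
  refine ⟨w, ?_⟩
  have h5 : f.eval w - z = 0 := by simpa using hw
  linear_combination h5

/-- Peeling off the first term of the series. -/
lemma aux_shift (f : Polynomial ℂ) (c : ℂ) (a : ℕ → ℂ)
    (H : ∀ w : ℂ, Tendsto (fun N => ∑ k ∈ Finset.range (N + 1), a k * (f.eval)^[k] w)
      atTop (𝓝 c)) (w : ℂ) :
    Tendsto (fun N => ∑ k ∈ Finset.range (N + 1), a (k + 1) * (f.eval)^[k] (f.eval w))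
      atTop (𝓝 (c - a 0 * w)) := by
  have key : ∀ N, ∑ k ∈ Finset.range (N + 1), a (k + 1) * (f.eval)^[k] (f.eval w)
      = (∑ k ∈ Finset.range (N + 2), a k * (f.eval)^[k] w) - a 0 * w := by
    intro N
    rw [Finset.sum_range_succ' (fun k => a k * (f.eval)^[k] w) (N + 1)]
    simp only [Function.iterate_succ_apply, Function.iterate_zero_apply]
    ring
  simp only [key]
  have h2 : Tendsto (fun N => ∑ k ∈ Finset.range (N + 2), a k * (f.eval)^[k] w)
      atTop (𝓝 c) := (H w).comp (tendsto_add_atTop_nat 1)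
  simpa using h2.sub (tendsto_const_nhds (x := a 0 * w))

/-- The first coefficient vanishes. -/
lemma aux_zero (f : Polynomial ℂ) (hd : 2 ≤ f.natDegree) (c : ℂ) (a : ℕ → ℂ)
    (H : ∀ w : ℂ, Tendsto (fun N => ∑ k ∈ Finset.range (N + 1), a k * (f.eval)^[k] w)
      atTop (𝓝 c)) : a 0 = 0 := by
  obtain ⟨x, y, hxy, hfxy⟩ := aux_noninj f hd
  have h1 := aux_shift f c a H x
  have h2 := aux_shift f c a H y
  rw [hfxy] at h1
  have h3 : c - a 0 * x = c - a 0 * y := tendsto_nhds_unique h1 h2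
  have h4 : a 0 * x = a 0 * y := by linear_combination -h3
  by_contra h0
  exact hxy (mul_left_cancel₀ h0 h4)

/-- All coefficients vanish. -/
lemma aux_key (f : Polynomial ℂ) (hd : 2 ≤ f.natDegree) (c : ℂ) :
    ∀ (n : ℕ) (a : ℕ → ℂ),
      (∀ w : ℂ, Tendsto (fun N => ∑ k ∈ Finset.range (N + 1), a k * (f.eval)^[k] w)
        atTop (𝓝 c)) → a n = 0 := by
  intro n
  induction n with
  | zero => exact fun a H => aux_zero f hd c a H
  | succ n ih =>
    intro a H
    have h0 : a 0 = 0 := aux_zero f hd c a H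
    have H' : ∀ z : ℂ, Tendsto
        (fun N => ∑ k ∈ Finset.range (N + 1), a (k + 1) * (f.eval)^[k] z) atTop (𝓝 c) := by
      intro z
      obtain ⟨w, hw⟩ := aux_surj f hd z
      have h1 := aux_shift f c a H w
      rw [hw, h0] at h1
      simpa using h1
    exact ih (fun k => a (k + 1)) H'

/-- A polynomial of degree at least 2 admits no global time average: there is no
not-identically-zero weight sequence `a` and constant `c` such that the partial sums
`∑_{n=0}^{N} aₙ f^[n]` converge locally uniformly (i.e. uniformly on compact subsets
of `ℂ`) to the constant function `c`. -/
theorem no_global_time_average (f : Polynomial ℂ) (hd : 2 ≤ f.natDegree) :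
    ¬ ∃ (a : ℕ → ℂ) (c : ℂ), (∃ n, a n ≠ 0) ∧
      TendstoLocallyUniformly
        (fun N (w : ℂ) => ∑ n ∈ Finset.range (N + 1), a n * (f.eval)^[n] w)
        (fun _ => c) atTop := by
  rintro ⟨a, c, ⟨n, hn⟩, hconv⟩
  have hpt : ∀ w : ℂ, Tendsto (fun N => ∑ k ∈ Finset.range (N + 1), a k * (f.eval)^[k] w)
      atTop (𝓝 c) := fun w =>
    (tendstoLocallyUniformlyOn_univ.mpr hconv).tendsto_at (Set.mem_univ w)
  exact hn (aux_key f hd c n a hpt)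
end

section
/- Let f : ℂᵏ → ℂᵏ be a polynomial endomorphism. Then sup_{n ∈ ℕ} deg(f^[n]) < ∞ if and only if there exist d ∈ ℕ with d ≥ 1 and complex numbers a₁, …, a_d, not all zero, such that a₁ f + a₂ f^[2] + ⋯ + a_d f^[d] = 0 as a polynomial map. -/
open MvPolynomial

/-- The `n`-th iterate of a polynomial endomorphism of `ℂᵏ`, as a tuple of
multivariate polynomials. -/
noncomputable def mvIter {k : ℕ} (f : Fin k → MvPolynomial (Fin k) ℂ) :
    ℕ → Fin k → MvPolynomial (Fin k) ℂ
  | 0 => fun i => X i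
  | n + 1 => fun i => bind₁ (mvIter f n) (f i)

lemma mvIter_succ' {k : ℕ} (f : Fin k → MvPolynomial (Fin k) ℂ) (n : ℕ) (i : Fin k) :
    mvIter f (n + 1) i = bind₁ f (mvIter f n i) := by
  induction n generalizing i with
  | zero => simp [mvIter]
  | succ n ih =>
    show bind₁ (mvIter f (n + 1)) (f i) = bind₁ f (bind₁ (mvIter f n) (f i))
    rw [bind₁_bind₁]
    have h2 : mvIter f (n + 1) = fun j => bind₁ f (mvIter f n j) := funext ih
    rw [h2]

lemma mvIter_shift {k d : ℕ} (f : Fin k → MvPolynomial (Fin k) ℂ) (a : Fin d → ℂ)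
    (h : ∀ i : Fin k, ∑ j : Fin d, a j • mvIter f ((j : ℕ) + 1) i = 0) (t : ℕ) :
    ∀ i : Fin k, ∑ j : Fin d, a j • mvIter f ((j : ℕ) + 1 + t) i = 0 := by
  induction t with
  | zero => simpa using h
  | succ t ih =>
    intro i
    have h2 := congrArg (bind₁ f) (ih i)
    rw [map_sum, map_zero] at h2
    rw [← h2]
    refine Finset.sum_congr rfl fun j _ => ?_
    rw [map_smul, ← mvIter_succ']
    ring_nf

/-- A polynomial endomorphism of `ℂᵏ` has uniformly bounded iterate degrees
(i.e. is locally finite) if and only if there is a nontrivial vanishing linear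
combination `a₁ f + a₂ f^[2] + ⋯ + a_d f^[d] = 0` of its iterates. -/
theorem locally_finite_iff_linear_relation {k : ℕ} (f : Fin k → MvPolynomial (Fin k) ℂ) :
    (∃ D : ℕ, ∀ n : ℕ, ∀ i : Fin k, (mvIter f n i).totalDegree ≤ D) ↔
    ∃ d : ℕ, 1 ≤ d ∧ ∃ a : Fin d → ℂ, a ≠ 0 ∧
      ∀ i : Fin k, ∑ j : Fin d, a j • mvIter f ((j : ℕ) + 1) i = 0 := by
  constructor
  · rintro ⟨D, hD⟩
    let M := Fin k → restrictTotalDegree (Fin k) ℂ D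
    let w : ℕ → M := fun n i =>
      ⟨mvIter f (n + 1) i, (mem_restrictTotalDegree _ _ _).2 (hD (n + 1) i)⟩
    have hw : ¬ LinearIndependent ℂ w := by
      intro h
      exact (instInfiniteNat).not_finite h.finite
    rw [linearIndependent_iff'] at hw
    push_neg at hw
    obtain ⟨s, g, hsum, n0, hn0s, hg0⟩ := hw
    refine ⟨s.sup id + 1, Nat.le_add_left 1 _,
      fun j => if (j : ℕ) ∈ s then g (j : ℕ) else 0, ?_, ?_⟩
    · intro hzero
      have hn0lt : n0 < s.sup id + 1 := Nat.lt_succ_of_le (Finset.le_sup (f := id) hn0s)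
      have := congrFun hzero ⟨n0, hn0lt⟩
      simp [hn0s] at this
      exact hg0 this
    · intro i
      let L : M →ₗ[ℂ] MvPolynomial (Fin k) ℂ :=
        (restrictTotalDegree (Fin k) ℂ D).subtype ∘ₗ LinearMap.proj i
      have hval := congrArg L hsum
      rw [map_sum, map_zero] at hval
      have hval' : ∑ n ∈ s, g n • mvIter f (n + 1) i = 0 := by
        simp [L, map_smul, w] at hval; exact hval
      calc ∑ j : Fin (s.sup id + 1), (if (j : ℕ) ∈ s then g (j : ℕ) else 0) • mvIter f ((j : ℕ) + 1) i
          = ∑ n ∈ Finset.range (s.sup id + 1), (if n ∈ s then g n else 0) • mvIter f (n + 1) i := by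
            exact Fin.sum_univ_eq_sum_range
              (fun n => (if n ∈ s then g n else 0) • mvIter f (n + 1) i) _
        _ = ∑ n ∈ Finset.range (s.sup id + 1), (if n ∈ s then g n • mvIter f (n + 1) i else 0) := by
            refine Finset.sum_congr rfl fun n _ => ?_
            split <;> simp
        _ = ∑ n ∈ Finset.range (s.sup id + 1) ∩ s, g n • mvIter f (n + 1) i := by
            rw [Finset.sum_ite_mem]
        _ = ∑ n ∈ s, g n • mvIter f (n + 1) i := by
            congr 1
            refine Finset.inter_eq_right.2 fun n hn => Finset.mem_range.2 ?_
            exact Nat.lt_succ_of_le (Finset.le_sup (f := id) hn)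
        _ = 0 := hval'
  · rintro ⟨d, hd, a, ha, hrel⟩
    have hex : ∃ j : Fin d, a j ≠ 0 := by
      by_contra h
      push_neg at h
      exact ha (funext fun j => h j)
    let S : Finset (Fin d) := Finset.univ.filter fun j => a j ≠ 0
    have hSne : S.Nonempty := by
      obtain ⟨j, hj⟩ := hex
      exact ⟨j, by simp [S, hj]⟩
    let m : Fin d := S.max' hSne
    have ham : a m ≠ 0 := (Finset.mem_filter.1 (S.max'_mem hSne)).2
    have hmax : ∀ j : Fin d, a j ≠ 0 → j ≤ m := fun j hj =>
      S.le_max' j (by simp [S, hj])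
    have key : ∀ n : ℕ, ∀ i : Fin k, mvIter f (n + 1) i ∈
        Submodule.span ℂ (Set.range fun j : Fin d => mvIter f ((j : ℕ) + 1) i) := by
      intro n
      induction n using Nat.strong_induction_on with
      | _ n ih =>
        intro i
        by_cases hn : n < d
        · exact Submodule.subset_span ⟨⟨n, hn⟩, rfl⟩
        · push_neg at hn
          have hmlt : (m : ℕ) < d := m.isLt
          have hmn : (m : ℕ) < n := lt_of_lt_of_le hmlt hn
          set t := n - (m : ℕ) with ht
          have hmt : (m : ℕ) + 1 + t = n + 1 := by omega
          have hsum := mvIter_shift f a hrel t i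
          rw [← Finset.add_sum_erase _ _ (Finset.mem_univ m), hmt] at hsum
          have heq : mvIter f (n + 1) i =
              (a m)⁻¹ • (-(∑ j ∈ Finset.univ.erase m, a j • mvIter f ((j : ℕ) + 1 + t) i)) := by
            have : a m • mvIter f (n + 1) i =
                -(∑ j ∈ Finset.univ.erase m, a j • mvIter f ((j : ℕ) + 1 + t) i) := by
              exact eq_neg_of_add_eq_zero_left hsum
            rw [← this, smul_smul, inv_mul_cancel₀ ham, one_smul]
          rw [heq]
          refine Submodule.smul_mem _ _ (Submodule.neg_mem _ (Submodule.sum_mem _ fun j hj => ?_))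
          by_cases haj : a j = 0
          · rw [haj, zero_smul]; exact Submodule.zero_mem _
          · refine Submodule.smul_mem _ _ ?_
            have hjm : j < m := lt_of_le_of_ne (hmax j haj) (Finset.ne_of_mem_erase hj)
            have hlt : (j : ℕ) + t < n := by omega
            have : (j : ℕ) + 1 + t = ((j : ℕ) + t) + 1 := by omega
            rw [this]
            exact ih _ hlt i
    set B : ℕ := Finset.univ.sup fun i : Fin k =>
      Finset.univ.sup fun j : Fin d => (mvIter f ((j : ℕ) + 1) i).totalDegree with hB
    refine ⟨max 1 B, fun n i => ?_⟩
    cases n with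
    | zero =>
      have : (mvIter f 0 i).totalDegree = 1 := by simp [mvIter]
      rw [this]; exact le_max_left _ _
    | succ n =>
      refine le_trans ?_ (le_max_right 1 B)
      have hdeg : ∀ x ∈ Submodule.span ℂ
          (Set.range fun j : Fin d => mvIter f ((j : ℕ) + 1) i), x.totalDegree ≤ B := by
        intro x hx
        induction hx using Submodule.span_induction with
        | mem x hx =>
          obtain ⟨j, rfl⟩ := hx
          rw [hB]
          exact le_trans (Finset.le_sup (f := fun j : Fin d => (mvIter f ((j : ℕ) + 1) i).totalDegree)
            (Finset.mem_univ j)) (Finset.le_sup (f := fun i : Fin k =>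
              Finset.univ.sup fun j : Fin d => (mvIter f ((j : ℕ) + 1) i).totalDegree)
              (Finset.mem_univ i))
        | zero => simp
        | add x y hx hy ihx ihy => exact (totalDegree_add x y).trans (max_le ihx ihy)
        | smul c x hx ihx => exact (totalDegree_smul_le c x).trans ihx
      exact hdeg _ (key n i)
end

section
/- Let f be a monic polynomial of degree d ≥ 2. Then the limit G(z) = lim_{n→∞} d^{-n} log⁺|f^[n](z)| exists for every z ∈ ℂ, and G(z) > 0 if and only if |f^[n](z)| → ∞. -/
open Filter Polynomial

lemma eval_norm_le' (p : Polynomial ℂ) (w : ℂ) :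
    ‖p.eval w‖ ≤ (∑ i ∈ Finset.range (p.natDegree + 1), ‖p.coeff i‖) * max ‖w‖ 1 ^ p.natDegree := by
  have h1 : (1:ℝ) ≤ max ‖w‖ 1 := le_max_right _ _
  rw [Polynomial.eval_eq_sum_range]
  refine (norm_sum_le _ _).trans ?_
  rw [Finset.sum_mul]
  refine Finset.sum_le_sum fun i hi => ?_
  rw [norm_mul, norm_pow]
  refine mul_le_mul_of_nonneg_left ?_ (norm_nonneg _)
  calc ‖w‖ ^ i ≤ (max ‖w‖ 1) ^ i := pow_le_pow_left₀ (norm_nonneg w) (le_max_left _ _) i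
    _ ≤ (max ‖w‖ 1) ^ p.natDegree := pow_le_pow_right₀ h1 (Nat.lt_succ_iff.mp (Finset.mem_range.mp hi))

lemma green_key (f : Polynomial ℂ) (d : ℕ) (hd : 2 ≤ d) (hdeg : f.natDegree = d)
    (hmonic : f.Monic) :
    ∃ C : ℝ, 0 ≤ C ∧ ∀ w : ℂ,
      |Real.log (max ‖f.eval w‖ 1) - d * Real.log (max ‖w‖ 1)| ≤ C := by
  set S : ℝ := ∑ i ∈ Finset.range (d + 1), ‖f.coeff i‖ with hSdef
  have hS1 : (1:ℝ) ≤ S := by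
    have hmem : d ∈ Finset.range (d + 1) := Finset.self_mem_range_succ _
    have h := Finset.single_le_sum (f := fun i => ‖f.coeff i‖) (fun i _ => norm_nonneg _) hmem
    have hc : f.coeff d = 1 := by rw [← hdeg]; exact hmonic.coeff_natDegree
    simpa [hc] using h
  set g := f.eraseLead with hg
  set T : ℝ := ∑ i ∈ Finset.range (g.natDegree + 1), ‖g.coeff i‖ with hTdef
  have hT0 : 0 ≤ T := Finset.sum_nonneg fun i _ => norm_nonneg _
  set R : ℝ := max 2 (2 * T) with hRdef
  have hR2 : (2:ℝ) ≤ R := le_max_left _ _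
  have hR1 : (1:ℝ) ≤ R := by linarith
  have hlogR : 0 ≤ Real.log R := Real.log_nonneg hR1
  refine ⟨max (Real.log S) (d * Real.log R), le_max_of_le_left (Real.log_nonneg hS1), fun w => ?_⟩
  have h1 : (1:ℝ) ≤ max ‖w‖ 1 := le_max_right _ _
  have h1' : (1:ℝ) ≤ max ‖f.eval w‖ 1 := le_max_right _ _
  have hu0 : 0 ≤ Real.log (max ‖w‖ 1) := Real.log_nonneg h1
  have hu0' : 0 ≤ Real.log (max ‖f.eval w‖ 1) := Real.log_nonneg h1'
  rw [abs_le]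
  constructor
  · -- lower bound : d log max w - C ≤ log max f w, i.e. -(C) ≤ log - d log
    rcases le_or_gt ‖w‖ R with hcase | hcase
    · have : Real.log (max ‖w‖ 1) ≤ Real.log R :=
        Real.log_le_log (lt_of_lt_of_le one_pos h1) (max_le hcase hR1)
      have : (d:ℝ) * Real.log (max ‖w‖ 1) ≤ d * Real.log R :=
        mul_le_mul_of_nonneg_left this (by positivity)
      have hC : (d:ℝ) * Real.log R ≤ max (Real.log S) (d * Real.log R) := le_max_right _ _
      linarith
    · -- |w| > R
      have hw1 : (1:ℝ) < ‖w‖ := by linarith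
      have hmaxw : max ‖w‖ 1 = ‖w‖ := max_eq_left hw1.le
      obtain ⟨e, he⟩ : ∃ e, d = e + 1 := ⟨d - 1, by omega⟩
      have hge : g.natDegree ≤ e := by
        have h := Polynomial.eraseLead_natDegree_le f
        rw [hg]
        omega
      have hgbound : ‖g.eval w‖ ≤ T * ‖w‖ ^ e := by
        refine (eval_norm_le' g w).trans ?_
        rw [hmaxw]
        exact mul_le_mul_of_nonneg_left (pow_le_pow_right₀ hw1.le hge) hT0
      have hfe : f.eval w = g.eval w + w ^ d := by
        conv_lhs => rw [← Polynomial.eraseLead_add_C_mul_X_pow f]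
        simp [hmonic.leadingCoeff, hdeg, hg]
      have hnorm : ‖w‖ ^ d - ‖g.eval w‖ ≤ ‖f.eval w‖ := by
        have : ‖w ^ d‖ ≤ ‖f.eval w‖ + ‖g.eval w‖ := by
          have : w ^ d = f.eval w - g.eval w := by rw [hfe]; ring
          rw [this]; exact norm_sub_le _ _
        rw [norm_pow] at this; linarith
      have hTw : T * ‖w‖ ^ e ≤ (‖w‖ / 2) * ‖w‖ ^ e := by
        have : 2 * T ≤ R := le_max_right _ _
        have hT2 : T ≤ ‖w‖ / 2 := by linarith
        exact mul_le_mul_of_nonneg_right hT2 (by positivity)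
      have hwd : ‖w‖ ^ d = ‖w‖ * ‖w‖ ^ e := by rw [he, pow_succ]; ring
      have hlower : ‖w‖ ^ d / 2 ≤ ‖f.eval w‖ := by
        rw [hwd] at hnorm ⊢
        nlinarith [hgbound]
      have hwd2 : (2:ℝ) ≤ ‖w‖ ^ d / 2 := by
        have h2w : (2:ℝ) ≤ ‖w‖ := by linarith
        have : (2:ℝ)^d ≤ ‖w‖ ^ d := pow_le_pow_left₀ (by norm_num) h2w d
        have : (2:ℝ)^2 ≤ (2:ℝ)^d := pow_le_pow_right₀ (by norm_num) hd
        nlinarith [pow_le_pow_left₀ (show (0:ℝ) ≤ 2 by norm_num) h2w d]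
      have hmaxf : max ‖f.eval w‖ 1 = ‖f.eval w‖ := max_eq_left (by linarith)
      have hlog : Real.log (‖w‖ ^ d / 2) ≤ Real.log ‖f.eval w‖ :=
        Real.log_le_log (by linarith) hlower
      have hlogexp : Real.log (‖w‖ ^ d / 2) = d * Real.log ‖w‖ - Real.log 2 := by
        rw [Real.log_div (by positivity) (by norm_num), Real.log_pow]
      have hlog2R : Real.log 2 ≤ Real.log R := Real.log_le_log two_pos hR2
      have hd1 : (1:ℝ) ≤ (d:ℝ) := by exact_mod_cast Nat.one_le_of_lt hd
      have hdlogR : Real.log R ≤ (d:ℝ) * Real.log R := by nlinarith [hlogR, hd1]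
      have hC : (d:ℝ) * Real.log R ≤ max (Real.log S) (d * Real.log R) := le_max_right _ _
      rw [hmaxf, hmaxw]
      linarith [hlog, hlogexp ▸ hlog]
  · -- upper bound: log max f w ≤ log S + d log max w
    have hupper : max ‖f.eval w‖ 1 ≤ S * max ‖w‖ 1 ^ d := by
      refine max_le ?_ ?_
      · have h := eval_norm_le' f w
        rwa [hdeg] at h
      · have : (1:ℝ) ≤ max ‖w‖ 1 ^ d := one_le_pow₀ h1
        nlinarith
    have hlog := Real.log_le_log (lt_of_lt_of_le one_pos h1') hupper
    rw [Real.log_mul (by linarith) (by positivity), Real.log_pow] at hlog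
    have hC : Real.log S ≤ max (Real.log S) (d * Real.log R) := le_max_left _ _
    linarith


/-- For a monic polynomial of degree `d ≥ 2` the Green's function limit
`lim d⁻ⁿ log⁺ |f^[n](z)|` exists at every point, and it is positive exactly on the
escaping set. -/
theorem green_function_exists_and_positive_iff_escaping (f : Polynomial ℂ) (d : ℕ)
    (hd : 2 ≤ d) (hdeg : f.natDegree = d) (hmonic : f.Monic) (z : ℂ) :
    ∃ L : ℝ, Tendsto
      (fun n : ℕ => ((d : ℝ) ^ n)⁻¹ * Real.log (max ‖(f.eval)^[n] z‖ 1))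
      atTop (nhds L) ∧
      (0 < L ↔ Tendsto (fun n => ‖(f.eval)^[n] z‖) atTop atTop) := by
  obtain ⟨C, hC0, hC⟩ := green_key f d hd hdeg hmonic
  have hd1 : (1:ℝ) < (d:ℝ) := by exact_mod_cast Nat.lt_of_lt_of_le one_lt_two hd
  have hd2 : (2:ℝ) ≤ (d:ℝ) := by exact_mod_cast hd
  have hdpos : (0:ℝ) < (d:ℝ) := by linarith
  set uz : ℕ → ℝ := fun n => Real.log (max ‖(f.eval)^[n] z‖ 1) with huz
  set h : ℕ → ℝ := fun n => ((d : ℝ) ^ n)⁻¹ * uz n with hh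
  have huz0 : ∀ n, 0 ≤ uz n := fun n => Real.log_nonneg (le_max_right _ _)
  have hstep : ∀ n, |uz (n+1) - d * uz n| ≤ C := by
    intro n
    have h0 := hC ((f.eval)^[n] z)
    simp only [huz, Function.iterate_succ_apply']
    simpa using h0
  have hcauchy : CauchySeq h := by
    refine cauchySeq_of_le_geometric ((d:ℝ)⁻¹) C (by
      rw [inv_lt_one_iff₀]; right; exact hd1) (fun n => ?_)
    rw [dist_comm, Real.dist_eq]
    have hp : (0:ℝ) < (d:ℝ)^(n+1) := pow_pos hdpos _
    have e1 : ((d:ℝ)^n)⁻¹ = ((d:ℝ)^(n+1))⁻¹ * d := by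
      rw [pow_succ]
      field_simp
    have e2 : h (n+1) - h n = ((d:ℝ)^(n+1))⁻¹ * (uz (n+1) - d * uz n) := by
      simp only [hh]
      rw [e1]; ring
    rw [e2, abs_mul, abs_of_pos (inv_pos.mpr hp)]
    have e3 : ((d:ℝ)^(n+1))⁻¹ ≤ ((d:ℝ)⁻¹)^n := by
      rw [← inv_pow]
      refine pow_le_pow_of_le_one (by positivity) (by
        rw [inv_le_one_iff₀]; right; exact hd1.le) (by omega)
    calc ((d:ℝ)^(n+1))⁻¹ * |uz (n+1) - d * uz n| ≤ ((d:ℝ)⁻¹)^n * C := by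
          exact mul_le_mul e3 (hstep n) (abs_nonneg _) (by positivity)
      _ = C * ((d:ℝ)⁻¹)^n := mul_comm _ _
  obtain ⟨L, hL⟩ := cauchySeq_tendsto_of_complete hcauchy
  refine ⟨L, hL, ?_, ?_⟩
  · -- 0 < L → escaping
    intro hLpos
    have hev : ∀ᶠ n in atTop, L/2 < h n := hL.eventually (eventually_gt_nhds (half_lt_self hLpos))
    have htend : Tendsto (fun n : ℕ => L/2 * (d:ℝ)^n) atTop atTop :=
      (tendsto_pow_atTop_atTop_of_one_lt hd1).const_mul_atTop (half_pos hLpos)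
    have huzt : Tendsto uz atTop atTop := by
      refine tendsto_atTop_mono' atTop ?_ htend
      filter_upwards [hev] with n hn
      have hp : (0:ℝ) < (d:ℝ)^n := pow_pos hdpos n
      have e : h n * (d:ℝ)^n = uz n := by
        simp only [hh]
        field_simp
      have h3 := mul_lt_mul_of_pos_right hn hp
      linarith
    have hmax : Tendsto (fun n => max ‖(f.eval)^[n] z‖ 1) atTop atTop := by
      refine (Real.tendsto_exp_atTop.comp huzt).congr fun n => ?_
      exact Real.exp_log (lt_of_lt_of_le one_pos (le_max_right _ _))
    have hmax1 : Tendsto (fun n => max ‖(f.eval)^[n] z‖ 1 - 1) atTop atTop :=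
      tendsto_atTop_add_const_right atTop (-1) hmax
    refine tendsto_atTop_mono (fun n => ?_) hmax1
    have : max ‖(f.eval)^[n] z‖ 1 ≤ ‖(f.eval)^[n] z‖ + 1 :=
      max_le (le_add_of_nonneg_right one_pos.le) (le_add_of_nonneg_left (norm_nonneg _))
    linarith
  · -- escaping → 0 < L
    intro hesc
    obtain ⟨n₀, hn₀⟩ := (hesc.eventually_ge_atTop (Real.exp (C+1))).exists
    have huzn₀ : C + 1 ≤ uz n₀ := by
      have h1 : Real.exp (C+1) ≤ max ‖(f.eval)^[n₀] z‖ 1 := hn₀.trans (le_max_left _ _)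
      have := Real.log_le_log (Real.exp_pos _) h1
      rwa [Real.log_exp] at this
    have hind : ∀ k, (d:ℝ)^k * (uz n₀ - C) ≤ uz (n₀ + k) - C := by
      intro k
      induction k with
      | zero => simp
      | succ k ih =>
        have hs : (d:ℝ) * uz (n₀+k) - C ≤ uz (n₀+k+1) := by
          have := abs_le.mp (hstep (n₀+k))
          linarith [this.1]
        have e : (d:ℝ)^(k+1) * (uz n₀ - C) = d * ((d:ℝ)^k * (uz n₀ - C)) := by
          rw [pow_succ]; ring
        have h2 : (d:ℝ) * ((d:ℝ)^k * (uz n₀ - C)) ≤ d * (uz (n₀+k) - C) :=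
          mul_le_mul_of_nonneg_left ih hdpos.le
        have : n₀ + (k+1) = (n₀ + k) + 1 := rfl
        rw [this, e]
        nlinarith [hs, hC0, hd2]
    have hevlow : ∀ᶠ n in atTop, ((d:ℝ)^n₀)⁻¹ ≤ h n := by
      rw [eventually_atTop]
      refine ⟨n₀, fun n hn => ?_⟩
      obtain ⟨k, rfl⟩ := Nat.exists_eq_add_of_le hn
      have h1 : (d:ℝ)^k ≤ uz (n₀ + k) := by
        have := hind k
        nlinarith [pow_pos hdpos k, huzn₀, hC0, this]
      have hp : (0:ℝ) < (d:ℝ)^(n₀+k) := pow_pos hdpos _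
      have : ((d:ℝ)^(n₀+k))⁻¹ * (d:ℝ)^k ≤ h (n₀+k) :=
        mul_le_mul_of_nonneg_left h1 (inv_pos.mpr hp).le
      calc ((d:ℝ)^n₀)⁻¹ = ((d:ℝ)^(n₀+k))⁻¹ * (d:ℝ)^k := by
            rw [pow_add]
            field_simp
        _ ≤ h (n₀+k) := this
    have : ((d:ℝ)^n₀)⁻¹ ≤ L := ge_of_tendsto hL hevlow
    have hp : (0:ℝ) < ((d:ℝ)^n₀)⁻¹ := by positivity
    linarith
end

section
/- Let X be a Banach space and (gₙ)_{n ∈ ℕ} a sequence in X with the recurrence property: for every ε > 0 and every n there exists m > n with ‖g_m − g_n‖ < ε. Then there exists a sequence (aₙ) of complex numbers, not identically zero, such that the partial sums ∑_{n=0}^{N} aₙ gₙ converge in X to 0. -/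
open Filter Finset

section SiegelAux

set_option linter.unusedSectionVars false

variable {X : Type*} [NormedAddCommGroup X] [NormedSpace ℂ X]

private def P (g : ℕ → X) (c : ℕ → ℂ) (K : ℕ) : X := ∑ n ∈ Finset.range K, c n • g n

private lemma P_add (g : ℕ → X) (c d : ℕ → ℂ) (K : ℕ) :
    P g (fun n => c n + d n) K = P g c K + P g d K := by
  simp [P, add_smul, Finset.sum_add_distrib]

private lemma P_stable (g : ℕ → X) {c : ℕ → ℂ} {N : ℕ} (h : ∀ n, N ≤ n → c n = 0)
    {K : ℕ} (hK : N ≤ K) : P g c K = P g c N := by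
  refine (Finset.sum_subset (Finset.range_subset_range.2 hK) ?_).symm
  intro x hx hnx
  rw [h x (by simpa using hnx), zero_smul]

private lemma P_zero (g : ℕ → X) {c : ℕ → ℂ} {M : ℕ} (h : ∀ n, c n ≠ 0 → M ≤ n)
    {K : ℕ} (hK : K ≤ M) : P g c K = 0 := by
  refine Finset.sum_eq_zero fun x hx => ?_
  rcases eq_or_ne (c x) 0 with h0 | h0
  · rw [h0, zero_smul]
  · exact absurd (h x h0) (by simp at hx; omega)

private lemma chain (g : ℕ → X) (hrec : ∀ ε > (0 : ℝ), ∀ n : ℕ, ∃ m > n, ‖g m - g n‖ < ε) :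
    ∀ (M n : ℕ), ∀ ε > (0:ℝ), ∃ m, M < m ∧ ‖g m - g n‖ < ε := by
  intro M
  induction M with
  | zero =>
    intro n ε hε
    obtain ⟨m, hm, h⟩ := hrec ε hε n
    exact ⟨m, by omega, h⟩
  | succ M IH =>
    intro n ε hε
    obtain ⟨m, hm, h1⟩ := IH n (ε/2) (by positivity)
    obtain ⟨m', hm', h2⟩ := hrec (ε/2) (by positivity) m
    refine ⟨m', by omega, ?_⟩
    calc ‖g m' - g n‖ ≤ ‖g m' - g m‖ + ‖g m - g n‖ := norm_sub_le_norm_sub_add_norm_sub _ _ _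
    _ < ε/2 + ε/2 := by linarith
    _ = ε := by ring

/-- A block supported in `[M, N)` approximating a finite combination `∑ n ∈ S, d n • g n`,
with all prefix sums bounded by `∑ ‖d n‖ * ‖g n‖ + ε`. -/
private lemma combo (g : ℕ → X) (hrec : ∀ ε > (0 : ℝ), ∀ n : ℕ, ∃ m > n, ‖g m - g n‖ < ε)
    (S : Finset ℕ) (d : ℕ → ℂ) :
    ∀ ε > (0:ℝ), ∀ M : ℕ, ∃ N, M ≤ N ∧ ∃ c : ℕ → ℂ,
      (∀ n, c n ≠ 0 → M ≤ n ∧ n < N) ∧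
      ‖P g c N - ∑ n ∈ S, d n • g n‖ < ε ∧
      ∀ K, ‖P g c K‖ ≤ (∑ n ∈ S, ‖d n‖ * ‖g n‖) + ε := by
  classical
  induction S using Finset.induction with
  | empty =>
    intro ε hε M
    refine ⟨M, le_rfl, fun _ => 0, by simp, by simpa [P] using hε, fun K => by simp [P]; linarith⟩
  | @insert a S ha IH =>
    intro ε hε M
    have hδ : (0:ℝ) < ε/2/(‖d a‖+1) := by positivity
    obtain ⟨m, hm, hgm⟩ := chain g hrec M a _ hδ
    obtain ⟨N, hN, c₂, hsupp₂, herr₂, hpre₂⟩ := IH (ε/2) (by positivity) (m+1)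
    set δ := ε/2/(‖d a‖+1) with hδdef
    have hda : ‖d a‖ * δ ≤ ε/2 := by
      rw [hδdef, mul_div_assoc']
      rw [div_le_iff₀ (by positivity : (0:ℝ) < ‖d a‖ + 1)]
      nlinarith [norm_nonneg (d a)]
    have hP1 : ∀ K, P g (fun n => if n = m then d a else 0) K
        = if m ∈ Finset.range K then d a • g m else 0 := by
      intro K
      simp only [P, ite_smul, zero_smul]
      exact Finset.sum_ite_eq' (Finset.range K) m (fun n => d a • g n)
    refine ⟨N, by omega, fun n => (if n = m then d a else 0) + c₂ n, ?_, ?_, ?_⟩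
    · intro n hn
      by_cases hnm : n = m
      · subst hnm; exact ⟨le_of_lt hm, by omega⟩
      · have hn' : c₂ n ≠ 0 := by simpa [hnm] using hn
        obtain ⟨h1, h2⟩ := hsupp₂ n hn'
        exact ⟨by omega, h2⟩
    · rw [P_add, hP1 N, if_pos (Finset.mem_range.2 (by omega)), Finset.sum_insert ha]
      have hrw : d a • g m + P g c₂ N - (d a • g a + ∑ n ∈ S, d n • g n)
          = d a • (g m - g a) + (P g c₂ N - ∑ n ∈ S, d n • g n) := by
        rw [smul_sub]; abel
      rw [hrw]
      calc ‖d a • (g m - g a) + (P g c₂ N - ∑ n ∈ S, d n • g n)‖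
          ≤ ‖d a • (g m - g a)‖ + ‖P g c₂ N - ∑ n ∈ S, d n • g n‖ := norm_add_le _ _
        _ < ‖d a‖ * δ + ε/2 := by
            rw [norm_smul]
            have := mul_le_mul_of_nonneg_left (le_of_lt hgm) (norm_nonneg (d a))
            rcases eq_or_lt_of_le (norm_nonneg (d a)) with h0 | h0
            · rw [← h0]; simpa using herr₂
            · have := (mul_lt_mul_iff_right₀ h0).2 hgm
              linarith
        _ ≤ ε/2 + ε/2 := by linarith
        _ = ε := by ring
    · intro K
      rw [P_add]
      have hgmb : ‖g m‖ ≤ ‖g a‖ + δ := by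
        have := norm_sub_norm_le (g m) (g a)
        linarith
      have h1 : ‖P g (fun n => if n = m then d a else 0) K‖ ≤ ‖d a‖ * ‖g m‖ := by
        rw [hP1 K]
        split_ifs
        · rw [norm_smul]
        · simp only [norm_zero]; positivity
      have h2 := hpre₂ K
      have h3 : ‖d a‖ * ‖g m‖ ≤ ‖d a‖ * ‖g a‖ + ‖d a‖ * δ :=
        le_trans (mul_le_mul_of_nonneg_left hgmb (norm_nonneg _)) (by rw [mul_add])
      calc ‖P g (fun n => if n = m then d a else 0) K + P g c₂ K‖
          ≤ ‖P g (fun n => if n = m then d a else 0) K‖ + ‖P g c₂ K‖ := norm_add_le _ _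
        _ ≤ ∑ n ∈ insert a S, ‖d n‖ * ‖g n‖ + ε := by
            rw [Finset.sum_insert ha]
            linarith


/-- Upgrade: blocks approximating `x = ∑ n ∈ S, d n • g n` whose prefix sums are
bounded by `‖x‖ + ε`. -/
private lemma upgrade (g : ℕ → X)
    (hrec : ∀ ε > (0 : ℝ), ∀ n : ℕ, ∃ m > n, ‖g m - g n‖ < ε)
    (S : Finset ℕ) (d : ℕ → ℂ) :
    ∀ ε > (0:ℝ), ∀ M : ℕ, ∃ N, M ≤ N ∧ ∃ c : ℕ → ℂ,
      (∀ n, c n ≠ 0 → M ≤ n ∧ n < N) ∧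
      ‖P g c N - ∑ n ∈ S, d n • g n‖ < ε ∧
      ∀ K, ‖P g c K‖ ≤ ‖∑ n ∈ S, d n • g n‖ + ε := by
  intro ε hε M
  set x := ∑ n ∈ S, d n • g n with hx
  set B := ∑ n ∈ S, ‖d n‖ * ‖g n‖ with hBdef
  have hB0 : 0 ≤ B := Finset.sum_nonneg fun n _ => mul_nonneg (norm_nonneg _) (norm_nonneg _)
  set R : ℕ := max 1 ⌈2*B/ε⌉₊ with hRdef
  have hR1 : 1 ≤ R := le_max_left _ _
  have hRpos : (0:ℝ) < (R:ℝ) := by exact_mod_cast Nat.lt_of_lt_of_le Nat.zero_lt_one hR1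
  have hRC : ((R:ℕ):ℂ) ≠ 0 := Nat.cast_ne_zero.2 (by omega)
  have hBR : B / (R:ℝ) ≤ ε/2 := by
    rw [div_le_iff₀ hRpos]
    have h1 : 2*B/ε ≤ (R:ℝ) := le_trans (Nat.le_ceil _) (Nat.cast_le.2 (le_max_right _ _))
    rw [div_le_iff₀ hε] at h1
    linarith
  set η := ε/(2*((R:ℝ)+1)) with hη
  have hη0 : 0 < η := by positivity
  -- the round target
  have hxR : ∑ n ∈ S, (d n / (R:ℂ)) • g n = ((R:ℕ):ℂ)⁻¹ • x := by
    rw [hx, Finset.smul_sum]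
    refine Finset.sum_congr rfl fun n _ => ?_
    rw [smul_smul, div_eq_inv_mul]
  have hBR' : ∑ n ∈ S, ‖d n / (R:ℂ)‖ * ‖g n‖ = B / (R:ℝ) := by
    rw [hBdef, Finset.sum_div]
    refine Finset.sum_congr rfl fun n _ => ?_
    rw [norm_div]
    have : ‖((R:ℕ):ℂ)‖ = (R:ℝ) := by exact_mod_cast Complex.norm_natCast R
    rw [this, div_mul_eq_mul_div]
  have hnormsm : ∀ r : ℕ, ‖(((r:ℕ):ℂ)/((R:ℕ):ℂ)) • x‖ = (r:ℝ)/(R:ℝ) * ‖x‖ := by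
    intro r
    rw [norm_smul, norm_div]
    congr 2 <;> exact_mod_cast Complex.norm_natCast _
  have main : ∀ r : ℕ, r ≤ R → ∃ N, M ≤ N ∧ ∃ c : ℕ → ℂ,
      (∀ n, c n ≠ 0 → M ≤ n ∧ n < N) ∧
      ‖P g c N - (((r:ℕ):ℂ)/((R:ℕ):ℂ)) • x‖ ≤ r * η ∧
      ∀ K, ‖P g c K‖ ≤ (r:ℝ)/(R:ℝ) * ‖x‖ + r * η + B/(R:ℝ) + η := by
    intro r
    induction r with
    | zero =>
      intro _
      refine ⟨M, le_rfl, fun _ => 0, by simp, by simp [P], fun K => ?_⟩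
      simp only [P, zero_smul, Finset.sum_const_zero, norm_zero, Nat.cast_zero, zero_div,
        zero_mul, zero_add]
      positivity
    | succ r IH =>
      intro hr
      obtain ⟨N1, hN1, c1, hs1, he1, hp1⟩ := IH (by omega)
      obtain ⟨N2, hN2, c2, hs2, he2, hp2⟩ := combo g hrec S (fun n => d n / (R:ℂ)) η hη0 N1
      rw [hxR] at he2
      rw [hBR'] at hp2
      have hc1stab : ∀ n, N1 ≤ n → c1 n = 0 := by
        intro n hn
        by_contra h
        exact absurd (hs1 n h).2 (by omega)
      refine ⟨N2, by omega, fun n => c1 n + c2 n, ?_, ?_, ?_⟩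
      · intro n hn
        by_cases h1 : c1 n = 0
        · have h2 : c2 n ≠ 0 := by simpa [h1] using hn
          obtain ⟨ha1, ha2⟩ := hs2 n h2
          exact ⟨le_trans hN1 ha1, ha2⟩
        · obtain ⟨hb1, hb2⟩ := hs1 n h1
          exact ⟨hb1, by omega⟩
      · rw [P_add, P_stable g hc1stab hN2]
        have hsplit : ((((r+1:ℕ)):ℂ)/((R:ℕ):ℂ)) • x
            = (((r:ℕ):ℂ)/((R:ℕ):ℂ)) • x + ((R:ℕ):ℂ)⁻¹ • x := by
          rw [← add_smul]
          congr 1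
          push_cast
          field_simp
        rw [hsplit]
        have hrw : P g c1 N1 + P g c2 N2 - ((((r:ℕ):ℂ)/((R:ℕ):ℂ)) • x + ((R:ℕ):ℂ)⁻¹ • x)
            = (P g c1 N1 - (((r:ℕ):ℂ)/((R:ℕ):ℂ)) • x) + (P g c2 N2 - ((R:ℕ):ℂ)⁻¹ • x) := by
          abel
        rw [hrw]
        calc ‖_ + _‖ ≤ ‖P g c1 N1 - (((r:ℕ):ℂ)/((R:ℕ):ℂ)) • x‖
            + ‖P g c2 N2 - ((R:ℕ):ℂ)⁻¹ • x‖ := norm_add_le _ _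
          _ ≤ r * η + η := by linarith [le_of_lt he2]
          _ = (r+1 : ℕ) * η := by push_cast; ring
      · intro K
        rw [P_add]
        by_cases hK : K ≤ N1
        · have h0 : P g c2 K = 0 := P_zero g (fun n hn => (hs2 n hn).1) hK
          rw [h0, add_zero]
          refine le_trans (hp1 K) ?_
          have hmono : (r:ℝ)/(R:ℝ) * ‖x‖ ≤ ((r+1:ℕ):ℝ)/(R:ℝ) * ‖x‖ := by
            apply mul_le_mul_of_nonneg_right _ (norm_nonneg x)
            apply div_le_div_of_nonneg_right _ hRpos.le
            · push_cast; linarith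
          push_cast at hmono ⊢
          nlinarith [hη0]
        · push_neg at hK
          rw [P_stable g hc1stab (le_of_lt hK)]
          have h1 : ‖P g c1 N1‖ ≤ (r:ℝ)/(R:ℝ) * ‖x‖ + r * η := by
            have := norm_sub_norm_le (P g c1 N1) ((((r:ℕ):ℂ)/((R:ℕ):ℂ)) • x)
            rw [hnormsm r] at this
            linarith
          have h2 := hp2 K
          calc ‖P g c1 N1 + P g c2 K‖ ≤ ‖P g c1 N1‖ + ‖P g c2 K‖ := norm_add_le _ _
            _ ≤ ((r+1:ℕ):ℝ)/(R:ℝ) * ‖x‖ + (r+1:ℕ) * η + B/(R:ℝ) + η := by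
              have hmono : (r:ℝ)/(R:ℝ) * ‖x‖ ≤ ((r+1:ℕ):ℝ)/(R:ℝ) * ‖x‖ := by
                apply mul_le_mul_of_nonneg_right _ (norm_nonneg x)
                apply div_le_div_of_nonneg_right _ hRpos.le
                · push_cast; linarith
              push_cast at hmono ⊢
              linarith
  obtain ⟨N, hN, c, hs, he, hp⟩ := main R le_rfl
  have hone : (((R:ℕ):ℂ)/((R:ℕ):ℂ)) = 1 := div_self hRC
  rw [hone, one_smul] at he
  have hRη : (R:ℝ) * η < ε := by
    rw [hη]
    rw [mul_div_assoc']
    rw [div_lt_iff₀ (by positivity)]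
    nlinarith
  have hfin : (R:ℝ)/(R:ℝ) = 1 := div_self (ne_of_gt hRpos)
  refine ⟨N, hN, c, hs, lt_of_le_of_lt he hRη, fun K => ?_⟩
  have := hp K
  rw [hfin, one_mul] at this
  have hsum : (R:ℝ) * η + B/(R:ℝ) + η ≤ ε := by
    have h2 : ((R:ℝ)+1) * η = ε/2 := by
      rw [hη]
      field_simp
    nlinarith [hBR]
  linarith

/-- One correction step: extend the coefficients past `N` so that the new error is `< ε`
and all intermediate prefix sums move by at most `‖old error‖ + ε`. -/
private lemma exists_next (g : ℕ → X)
    (hrec : ∀ ε > (0 : ℝ), ∀ n : ℕ, ∃ m > n, ‖g m - g n‖ < ε)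
    (N : ℕ) (A : ℕ → ℂ) (hA : ∀ n, N ≤ n → A n = 0) {ε : ℝ} (hε : 0 < ε) :
    ∃ q : {q : ℕ × (ℕ → ℂ) // ∀ n, q.1 ≤ n → q.2 n = 0},
      N < q.1.1 ∧ (∀ n, n ≤ N → q.1.2 n = A n) ∧ ‖P g q.1.2 q.1.1‖ < ε ∧
      ∀ K, ‖P g q.1.2 K - P g A K‖ ≤ ‖P g A N‖ + ε := by
  obtain ⟨N', hN', c, hs, he, hp⟩ := upgrade g hrec (Finset.range N) (fun n => -A n) ε hε (N+1)
  have hx : ∑ n ∈ Finset.range N, (-A n) • g n = -(P g A N) := by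
    simp [P, neg_smul, Finset.sum_neg_distrib]
  rw [hx] at he hp
  have hcz : ∀ n, n ≤ N → c n = 0 := by
    intro n hn
    by_contra h
    exact absurd (hs n h).1 (by omega)
  have hsupp : ∀ n, N' ≤ n → A n + c n = 0 := by
    intro n hn
    have h1 : A n = 0 := hA n (by omega)
    have h2 : c n = 0 := by
      by_contra h
      exact absurd (hs n h).2 (by omega)
    rw [h1, h2, add_zero]
  refine ⟨⟨(N', fun n => A n + c n), hsupp⟩, show N < N' by omega, ?_, ?_, ?_⟩
  · show ∀ n, n ≤ N → A n + c n = A n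
    intro n hn
    rw [hcz n hn, add_zero]
  · show ‖P g (fun n => A n + c n) N'‖ < ε
    have h1 : P g (fun n => A n + c n) N' = P g A N + P g c N' := by
      rw [P_add, P_stable g hA (by omega : N ≤ N')]
    rw [h1]
    have h2 : P g A N + P g c N' = P g c N' - -(P g A N) := by abel
    rw [h2]
    exact he
  · show ∀ K, ‖P g (fun n => A n + c n) K - P g A K‖ ≤ ‖P g A N‖ + ε
    intro K
    have h1 : P g (fun n => A n + c n) K - P g A K = P g c K := by
      rw [P_add]; abel
    rw [h1]
    calc ‖P g c K‖ ≤ ‖-(P g A N)‖ + ε := hp K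
      _ = ‖P g A N‖ + ε := by rw [norm_neg]


private noncomputable def stages (g : ℕ → X)
    (hrec : ∀ ε > (0 : ℝ), ∀ n : ℕ, ∃ m > n, ‖g m - g n‖ < ε) :
    ℕ → {q : ℕ × (ℕ → ℂ) // ∀ n, q.1 ≤ n → q.2 n = 0}
  | 0 => ⟨(1, fun n => if n = 0 then 1 else 0), by
      intro n hn
      have hn' : 1 ≤ n := hn
      show (if n = 0 then (1:ℂ) else 0) = 0
      rw [if_neg (by omega)]⟩
  | (k+1) => Classical.choose (exists_next g hrec (stages g hrec k).1.1 (stages g hrec k).1.2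
      (stages g hrec k).2 (show (0:ℝ) < 1/2^(k+1) by positivity))

private lemma stages_spec (g : ℕ → X)
    (hrec : ∀ ε > (0 : ℝ), ∀ n : ℕ, ∃ m > n, ‖g m - g n‖ < ε) (k : ℕ) :
    (stages g hrec k).1.1 < (stages g hrec (k+1)).1.1 ∧
    (∀ n, n ≤ (stages g hrec k).1.1 → (stages g hrec (k+1)).1.2 n = (stages g hrec k).1.2 n) ∧
    ‖P g (stages g hrec (k+1)).1.2 (stages g hrec (k+1)).1.1‖ < 1/2^(k+1) ∧
    ∀ K, ‖P g (stages g hrec (k+1)).1.2 K - P g (stages g hrec k).1.2 K‖ ≤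
      ‖P g (stages g hrec k).1.2 (stages g hrec k).1.1‖ + 1/2^(k+1) :=
  Classical.choose_spec (exists_next g hrec (stages g hrec k).1.1 (stages g hrec k).1.2
      (stages g hrec k).2 (show (0:ℝ) < 1/2^(k+1) by positivity))

end SiegelAux

open Filter

/-- Abstract version of the Siegel-disc construction: a sequence in a Banach space with
the recurrence property (every term is approximated by some later term, to any accuracy)
admits a nontrivial weight sequence whose weighted partial sums converge to `0`. -/
theorem recurrent_sequence_has_time_average (X : Type*) [NormedAddCommGroup X]
    [NormedSpace ℂ X] [CompleteSpace X] (g : ℕ → X)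
    (hrec : ∀ ε > (0 : ℝ), ∀ n : ℕ, ∃ m > n, ‖g m - g n‖ < ε) :
    ∃ a : ℕ → ℂ, (∃ n, a n ≠ 0) ∧
      Tendsto (fun N => ∑ n ∈ Finset.range (N + 1), a n • g n) atTop (nhds 0) := by
  classical
  set Nk : ℕ → ℕ := fun k => (stages g hrec k).1.1 with hNk
  set Ak : ℕ → ℕ → ℂ := fun k => (stages g hrec k).1.2 with hAk
  have hspec : ∀ k, Nk k < Nk (k+1) ∧
      (∀ n, n ≤ Nk k → Ak (k+1) n = Ak k n) ∧
      ‖P g (Ak (k+1)) (Nk (k+1))‖ < 1/2^(k+1) ∧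
      ∀ K, ‖P g (Ak (k+1)) K - P g (Ak k) K‖ ≤ ‖P g (Ak k) (Nk k)‖ + 1/2^(k+1) :=
    stages_spec g hrec
  have hsup : ∀ k n, Nk k ≤ n → Ak k n = 0 := fun k => (stages g hrec k).2
  have hmono : StrictMono Nk := strictMono_nat_of_lt_succ (fun k => (hspec k).1)
  have hge : ∀ k, k < Nk k := by
    intro k
    induction k with
    | zero => show 0 < Nk 0; exact Nat.zero_lt_one
    | succ k IH => have := (hspec k).1; omega
  have hagree : ∀ k j, k ≤ j → ∀ n, n ≤ Nk k → Ak j n = Ak k n := by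
    intro k j hkj
    induction j, hkj using Nat.le_induction with
    | base => intro n _; rfl
    | succ j hkj IH =>
      intro n hn
      have h1 := (hspec j).2.1 n (le_trans hn (hmono.monotone hkj))
      rw [h1]
      exact IH n hn
  set a : ℕ → ℂ := fun n => Ak n n with ha
  have haA : ∀ k n, n ≤ Nk k → a n = Ak k n := by
    intro k n hn
    rcases le_total k n with h | h
    · exact hagree k n h n hn
    · exact (hagree n k h n (le_of_lt (hge n))).symm
  have hPa : ∀ k K, K ≤ Nk k → P g a K = P g (Ak k) K := by
    intro k K hK
    refine Finset.sum_congr rfl fun n hn => ?_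
    rw [haA k n (by simp at hn; omega)]
  have herr : ∀ k, ‖P g (Ak (k+1)) (Nk (k+1))‖ < 1/2^(k+1) := fun k => (hspec k).2.2.1
  have hPstab : ∀ k K, Nk k ≤ K → P g (Ak k) K = P g (Ak k) (Nk k) :=
    fun k K hK => P_stable g (hsup k) hK
  have hbound : ∀ j K, Nk (j+1) ≤ K → K ≤ Nk (j+2) → ‖P g a K‖ ≤ 3 * (1/2^(j+1)) := by
    intro j K h1 h2
    rw [hPa (j+2) K h2]
    have hd := (hspec (j+1)).2.2.2 K
    have hst : P g (Ak (j+1)) K = P g (Ak (j+1)) (Nk (j+1)) := hPstab (j+1) K h1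
    have he1 := herr j
    have htri : ‖P g (Ak (j+2)) K‖
        ≤ ‖P g (Ak (j+2)) K - P g (Ak (j+1)) K‖ + ‖P g (Ak (j+1)) K‖ := by
      have hid : P g (Ak (j+2)) K = (P g (Ak (j+2)) K - P g (Ak (j+1)) K) + P g (Ak (j+1)) K := by
        abel
      nth_rewrite 1 [hid]
      exact norm_add_le _ _
    rw [hst] at htri
    have hhalf : (1:ℝ)/2^(j+1+1) ≤ 1/2^(j+1) := by
      apply div_le_div_of_nonneg_left (by norm_num) (by positivity)
      apply pow_le_pow_right₀ (by norm_num)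
      omega
    have hd' := hd
    rw [hst] at hd'
    linarith
  refine ⟨a, ⟨0, ?_⟩, ?_⟩
  · show Ak 0 0 ≠ 0
    show (if (0:ℕ) = 0 then (1:ℂ) else 0) ≠ 0
    simp
  · rw [NormedAddCommGroup.tendsto_nhds_zero]
    intro ε hε
    obtain ⟨k, hk⟩ : ∃ k : ℕ, 3 * ((1:ℝ)/2^(k+1)) < ε := by
      obtain ⟨k, hk⟩ := exists_pow_lt_of_lt_one (show (0:ℝ) < ε/3 by positivity)
        (by norm_num : (1:ℝ)/2 < 1)
      refine ⟨k, ?_⟩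
      have h1 : ((1:ℝ)/2)^(k+1) ≤ (1/2)^k := by
        apply pow_le_pow_of_le_one (by norm_num) (by norm_num)
        omega
      have h2 : ((1:ℝ)/2)^(k+1) = 1/2^(k+1) := by
        rw [div_pow]
        norm_num
      rw [h2] at h1
      linarith
    rw [eventually_atTop]
    refine ⟨Nk (k+1), fun N hN => ?_⟩
    show ‖P g a (N+1)‖ < ε
    set K := N + 1 with hKdef
    have hK1 : Nk (k+1) ≤ K := by omega
    have hex : ∃ j, K < Nk j := ⟨K, hge K⟩
    set j0 := Nat.find hex with hj0
    have hj0spec : K < Nk j0 := Nat.find_spec hex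
    have hj2 : k + 2 ≤ j0 := by
      by_contra h
      push_neg at h
      have h3 := hmono.monotone (show j0 ≤ k+1 by omega)
      omega
    set j := j0 - 2 with hj
    have hj0eq : j0 = j + 2 := by omega
    have hlow : Nk (j+1) ≤ K := by
      have h4 := Nat.find_min hex (show j+1 < j0 by omega)
      omega
    have hup : K ≤ Nk (j+2) := by
      rw [← hj0eq]
      omega
    have hb := hbound j K hlow hup
    have hcmp : 3 * ((1:ℝ)/2^(j+1)) ≤ 3 * (1/2^(k+1)) := by
      have h5 : (2:ℝ)^(k+1) ≤ 2^(j+1) := by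
        apply pow_le_pow_right₀ (by norm_num)
        omega
      have h6 : (0:ℝ) < 2^(k+1) := by positivity
      have h7 : (1:ℝ)/2^(j+1) ≤ 1/2^(k+1) := by
        apply div_le_div_of_nonneg_left (by norm_num) (by positivity) h5
      linarith
    linarith
end
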